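/- arXiv:2303.09460 — 2 statements merged into one kernel-verified Lean document; each statement's English description precedes it below -/
import Mathlib

section
/- The groups G₁ = A₅ × A₅ × A₅ and G₂ = C₃₀ × C₃₀ × C₃₀ × C₂ × C₂ × C₂ are of the same two orders type: |G₁| = |G₂| = 60³ and π_e(G₁) = π_e(G₂); moreover G₂ is solvable while G₁ is not solvable. -/
section Aux

/-- If a group has an element of order 30 and every element satisfies `x ^ 30 = 1`,
then the set of element orders is the set of divisors of 30. -/
lemma aux_orderSet_eq {G : Type*} [Group G] (g : G) (hg : orderOf g = 30)
    (hall : ∀ x : G, x ^ 30 = 1) :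
    {n : ℕ | ∃ x : G, orderOf x = n} = {n : ℕ | n ∣ 30} := by
  ext n
  simp only [Set.mem_setOf_eq]
  constructor
  · rintro ⟨x, rfl⟩
    exact orderOf_dvd_of_pow_eq_one (hall x)
  · intro hn
    refine ⟨g ^ (orderOf g / n), ?_⟩
    exact orderOf_pow_orderOf_div (by rw [hg]; norm_num) (hg ▸ hn)

set_option maxRecDepth 40000 in
set_option maxHeartbeats 2000000 in
lemma aux_A5_pow30 : ∀ y : alternatingGroup (Fin 5), y ^ 30 = 1 := by decide

lemma aux_card_A5 : Nat.card (alternatingGroup (Fin 5)) = 60 := by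
  have h := two_mul_card_alternatingGroup (α := Fin 5)
  rw [Fintype.card_perm, Fintype.card_fin, show Nat.factorial 5 = 120 from rfl] at h
  rw [Nat.card_eq_fintype_card]
  omega

def a2 : alternatingGroup (Fin 5) := ⟨c[0, 1] * c[2, 3], by rw [Equiv.Perm.mem_alternatingGroup]; decide⟩
def a3 : alternatingGroup (Fin 5) := ⟨c[0, 1, 2], by rw [Equiv.Perm.mem_alternatingGroup]; decide⟩
def a5 : alternatingGroup (Fin 5) := ⟨c[0, 1, 2, 3, 4], by rw [Equiv.Perm.mem_alternatingGroup]; decide⟩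

lemma aux_orderOf_a2 : orderOf a2 = 2 :=
  orderOf_eq_prime (by decide) (by decide)

lemma aux_orderOf_a3 : orderOf a3 = 3 :=
  orderOf_eq_prime (by decide) (by decide)

set_option maxRecDepth 40000 in
lemma aux_orderOf_a5 : orderOf a5 = 5 :=
  haveI : Fact (Nat.Prime 5) := ⟨by norm_num⟩
  orderOf_eq_prime (by decide) (by decide)

lemma aux_zmod30_pow : ∀ x : Multiplicative (ZMod 30), x ^ 30 = 1 := by decide

lemma aux_zmod2_pow : ∀ x : Multiplicative (ZMod 2), x ^ 30 = 1 := by decide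

end Aux

theorem stmt_10 :
    Nat.card (alternatingGroup (Fin 5) × alternatingGroup (Fin 5) × alternatingGroup (Fin 5))
        = 60 ^ 3 ∧
    Nat.card (Multiplicative (ZMod 30) × Multiplicative (ZMod 30) × Multiplicative (ZMod 30) ×
        Multiplicative (ZMod 2) × Multiplicative (ZMod 2) × Multiplicative (ZMod 2)) = 60 ^ 3 ∧
    {n : ℕ | ∃ x : alternatingGroup (Fin 5) × alternatingGroup (Fin 5) × alternatingGroup (Fin 5),
        orderOf x = n} =
      {n : ℕ | ∃ x : Multiplicative (ZMod 30) × Multiplicative (ZMod 30) ×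
        Multiplicative (ZMod 30) × Multiplicative (ZMod 2) × Multiplicative (ZMod 2) ×
        Multiplicative (ZMod 2), orderOf x = n} ∧
    IsSolvable (Multiplicative (ZMod 30) × Multiplicative (ZMod 30) × Multiplicative (ZMod 30) ×
        Multiplicative (ZMod 2) × Multiplicative (ZMod 2) × Multiplicative (ZMod 2)) ∧
    ¬ IsSolvable (alternatingGroup (Fin 5) × alternatingGroup (Fin 5) ×
        alternatingGroup (Fin 5)) := by
  refine ⟨?_, ?_, ?_, ?_, ?_⟩
  · rw [Nat.card_prod, Nat.card_prod, aux_card_A5]; ring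
  · rw [Nat.card_prod, Nat.card_prod, Nat.card_prod, Nat.card_prod, Nat.card_prod]
    have h30 : Nat.card (Multiplicative (ZMod 30)) = 30 := Nat.card_zmod 30
    have h2 : Nat.card (Multiplicative (ZMod 2)) = 2 := Nat.card_zmod 2
    rw [h30, h2]; norm_num
  · have hA : {n : ℕ | ∃ x : alternatingGroup (Fin 5) × alternatingGroup (Fin 5) ×
        alternatingGroup (Fin 5), orderOf x = n} = {n : ℕ | n ∣ 30} := by
      refine aux_orderSet_eq (a2, a3, a5) ?_ ?_
      · rw [Prod.orderOf, Prod.orderOf, aux_orderOf_a2, aux_orderOf_a3, aux_orderOf_a5]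
        decide
      · rintro ⟨x, y, z⟩
        show (x ^ 30, y ^ 30, z ^ 30) = (1, 1, 1)
        rw [aux_A5_pow30 x, aux_A5_pow30 y, aux_A5_pow30 z]
    have hB : {n : ℕ | ∃ x : Multiplicative (ZMod 30) × Multiplicative (ZMod 30) ×
        Multiplicative (ZMod 30) × Multiplicative (ZMod 2) × Multiplicative (ZMod 2) ×
        Multiplicative (ZMod 2), orderOf x = n} = {n : ℕ | n ∣ 30} := by
      refine aux_orderSet_eq (Multiplicative.ofAdd (1 : ZMod 30), 1, 1, 1, 1, 1) ?_ ?_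
      · rw [Prod.orderOf]
        simp only [orderOf_one, Prod.orderOf, Nat.lcm_self, Nat.lcm]
        rw [orderOf_ofAdd_eq_addOrderOf, ZMod.addOrderOf_one]
        decide
      · rintro ⟨a, b, c, d, e, f⟩
        show (a ^ 30, b ^ 30, c ^ 30, d ^ 30, e ^ 30, f ^ 30) = (1, 1, 1, 1, 1, 1)
        rw [aux_zmod30_pow a, aux_zmod30_pow b, aux_zmod30_pow c,
          aux_zmod2_pow d, aux_zmod2_pow e, aux_zmod2_pow f]
    rw [hA, hB]
  · exact (inferInstance : Group.IsSolvable (Multiplicative (ZMod 30) × Multiplicative (ZMod 30) ×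
      Multiplicative (ZMod 30) × Multiplicative (ZMod 2) × Multiplicative (ZMod 2) ×
      Multiplicative (ZMod 2)))
  · intro (h : Group.IsSolvable (alternatingGroup (Fin 5) × alternatingGroup (Fin 5) ×
        alternatingGroup (Fin 5)))
    have h1 : Group.IsSolvable (alternatingGroup (Fin 5)) :=
      solvable_of_surjective (f := MonoidHom.fst (alternatingGroup (Fin 5))
        (alternatingGroup (Fin 5) × alternatingGroup (Fin 5))) Prod.fst_surjective
    have h2 : IsSolvable (Equiv.Perm (Fin 5)) := by
      refine solvable_of_ker_le_range (alternatingGroup (Fin 5)).subtype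
        (Equiv.Perm.sign (α := Fin 5)) ?_
      rw [Subgroup.range_subtype]
      exact le_of_eq rfl
    exact Equiv.Perm.fin_5_not_solvable h2
end

section
/- If two finite groups G and H admit a bijection between their conjugacy classes of cyclic subgroups which preserves the order of the subgroups and the cardinality of the conjugacy classes, then G and H are of the same order type. -/
open MulAction Pointwise

section Aux

variable {G : Type*} [Group G]

lemma aux_zpowers_isCyclic (x : G) : IsCyclic (Subgroup.zpowers x) := by
  refine ⟨⟨⟨x, Subgroup.mem_zpowers x⟩, fun y => ?_⟩⟩
  obtain ⟨k, hk⟩ := y.2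
  exact ⟨k, Subtype.ext (by simpa using hk)⟩

lemma aux_card_of_orbit {A B : Subgroup G} (h : A ∈ orbit (ConjAct G) B) :
    Nat.card A = Nat.card B := by
  obtain ⟨g, rfl⟩ := h
  exact (Nat.card_congr (Subgroup.equivSMul g B).toEquiv).symm

lemma aux_cyclic_of_orbit {A B : Subgroup G} (h : A ∈ orbit (ConjAct G) B)
    (hB : IsCyclic B) : IsCyclic A := by
  obtain ⟨g, rfl⟩ := h
  exact isCyclic_of_surjective _ (Subgroup.equivSMul g B).surjective

lemma aux_gen_count [Fintype G] (K : Subgroup G) (hK : IsCyclic K) :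
    Nat.card {x : G // Subgroup.zpowers x = K} = Nat.totient (Nat.card K) := by
  classical
  have e : {x : G // Subgroup.zpowers x = K} ≃ {y : K // orderOf y = Fintype.card K} := by
    refine ⟨fun x => ⟨⟨x.1, by have h := Subgroup.mem_zpowers x.1; rwa [x.2] at h⟩, ?_⟩,
      fun y => ⟨y.1.1, ?_⟩,
      fun x => rfl, fun y => rfl⟩
    · rw [Subgroup.orderOf_mk, ← Nat.card_zpowers, x.2, Nat.card_eq_fintype_card]
    · have h1 : Subgroup.zpowers (y.1 : G) = Subgroup.map K.subtype (Subgroup.zpowers y.1) :=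
        (MonoidHom.map_zpowers K.subtype y.1).symm
      have h2 : Subgroup.zpowers y.1 = (⊤ : Subgroup K) := by
        apply Subgroup.eq_top_of_card_eq
        rw [Nat.card_zpowers, y.2, Nat.card_eq_fintype_card]
      rw [h1, h2, ← MonoidHom.range_eq_map, Subgroup.range_subtype]
  rw [Nat.card_congr e, Nat.card_eq_fintype_card, Fintype.card_subtype, Nat.card_eq_fintype_card]
  exact hK.card_orderOf_eq_totient dvd_rfl

lemma aux_count (G : Type*) [Group G] [Fintype G] (d : ℕ) :
    ∀ (_ : Fintype {q : Quotient (orbitRel (ConjAct G) (Subgroup G)) // IsCyclic q.out}),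
    Nat.card {x : G // x ^ d = 1} =
    ∑ q : {q : Quotient (orbitRel (ConjAct G) (Subgroup G)) // IsCyclic q.out},
      if Nat.card q.1.out ∣ d then
        Nat.card (orbit (ConjAct G) q.1.out) * Nat.totient (Nat.card q.1.out) else 0 := by
  classical
  intro _
  set S := Quotient (orbitRel (ConjAct G) (Subgroup G))
  -- the classifying map
  have hcyc : ∀ x : G, IsCyclic (⟦Subgroup.zpowers x⟧ : S).out := by
    intro x
    have h : (⟦Subgroup.zpowers x⟧ : S).out ∈ orbit (ConjAct G) (Subgroup.zpowers x) :=
      (orbitRel_apply (G := ConjAct G)).mp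
        (Quotient.mk_out (s := orbitRel (ConjAct G) (Subgroup G)) (Subgroup.zpowers x))
    exact aux_cyclic_of_orbit h (aux_zpowers_isCyclic x)
  set c : {x : G // x ^ d = 1} → {q : S // IsCyclic q.out} :=
    fun x => ⟨⟦Subgroup.zpowers x.1⟧, hcyc x.1⟩ with hc
  rw [Nat.card_congr (Equiv.sigmaFiberEquiv c).symm, Nat.card_eq_fintype_card,
    Fintype.card_sigma]
  refine Finset.sum_congr rfl fun q _ => ?_
  have key : ∀ x : {x : G // x ^ d = 1}, c x = q ↔
      Subgroup.zpowers x.1 ∈ orbit (ConjAct G) q.1.out := by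
    intro x
    rw [hc, Subtype.ext_iff, Quotient.mk_eq_iff_out]
    rfl
  by_cases hdvd : Nat.card q.1.out ∣ d
  · rw [if_pos hdvd, ← Nat.card_eq_fintype_card]
    -- fibre over each subgroup in the orbit
    have e2 : {x : {x : G // x ^ d = 1} // c x = q} ≃
        Σ K : orbit (ConjAct G) q.1.out, {x : G // Subgroup.zpowers x = K.1} := by
      refine Equiv.trans (Equiv.trans ?_ (Equiv.sigmaFiberEquiv
        (fun x : {x : G // Subgroup.zpowers x ∈ orbit (ConjAct G) q.1.out} =>
          (⟨Subgroup.zpowers x.1, x.2⟩ : orbit (ConjAct G) q.1.out))).symm)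
        (Equiv.sigmaCongrRight (fun K => ?_))
      · refine ⟨fun x => ⟨x.1.1, (key x.1).mp x.2⟩, fun x => ⟨⟨x.1, ?_⟩, ?_⟩,
          fun x => rfl, fun x => rfl⟩
        · rw [← orderOf_dvd_iff_pow_eq_one, ← Nat.card_zpowers, aux_card_of_orbit x.2]
          exact hdvd
        · exact (key _).mpr x.2
      · exact ⟨fun x => ⟨x.1.1, congrArg Subtype.val x.2⟩,
          fun x => ⟨⟨x.1, by rw [x.2]; exact K.2⟩, Subtype.ext x.2⟩, fun x => rfl, fun x => rfl⟩
    rw [Nat.card_congr e2, Nat.card_eq_fintype_card, Fintype.card_sigma]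
    have hterm : ∀ K : orbit (ConjAct G) q.1.out,
        Fintype.card {x : G // Subgroup.zpowers x = K.1} = Nat.totient (Nat.card q.1.out) := by
      intro K
      rw [← Nat.card_eq_fintype_card, aux_gen_count K.1 (aux_cyclic_of_orbit K.2 q.2),
        aux_card_of_orbit K.2]
    rw [Finset.sum_congr rfl fun K _ => hterm K, Finset.sum_const, Finset.card_univ,
      smul_eq_mul, ← Nat.card_eq_fintype_card]
  · rw [if_neg hdvd, ← Nat.card_eq_fintype_card, Nat.card_eq_zero]
    left
    refine ⟨fun x => hdvd ?_⟩
    obtain ⟨x, hx⟩ := x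
    have h1 := aux_card_of_orbit ((key x).mp hx)
    rw [Nat.card_zpowers] at h1
    rw [← h1]
    exact orderOf_dvd_of_pow_eq_one x.2

end Aux

open MulAction Pointwise in
theorem stmt_15 (G H : Type*) [Group G] [Fintype G] [Group H] [Fintype H]
    (e : {q : Quotient (orbitRel (ConjAct G) (Subgroup G)) // IsCyclic q.out} ≃
         {q : Quotient (orbitRel (ConjAct H) (Subgroup H)) // IsCyclic q.out})
    (hord : ∀ q, Nat.card ((e q).1.out) = Nat.card (q.1.out))
    (hclass : ∀ q, Nat.card (orbit (ConjAct H) (e q).1.out) =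
      Nat.card (orbit (ConjAct G) q.1.out)) :
    ∀ d : ℕ, 0 < d →
      Nat.card {x : G // x ^ d = 1} = Nat.card {y : H // y ^ d = 1} := by
  classical
  intro d _
  have fG : Fintype {q : Quotient (orbitRel (ConjAct G) (Subgroup G)) // IsCyclic q.out} :=
    Fintype.ofFinite _
  have fH : Fintype {q : Quotient (orbitRel (ConjAct H) (Subgroup H)) // IsCyclic q.out} :=
    Fintype.ofFinite _
  rw [aux_count G d fG, aux_count H d fH]
  rw [← Equiv.sum_comp e (fun q => if Nat.card q.1.out ∣ d then
      Nat.card (orbit (ConjAct H) q.1.out) * Nat.totient (Nat.card q.1.out) else 0)]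
  refine Finset.sum_congr rfl fun q _ => ?_
  rw [hord q, hclass q]
end
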